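/- arXiv:2401.01190 — 2 statements merged into one kernel-verified Lean document; each statement's English description precedes it below -/
import Mathlib

section
/- For every pairwise reciprocal matrix A of size n ≥ 1, the constrained WLS minimizer is unique: if w : Fin n → ℝ satisfies ∑ᵢ w i = 1 and f(w) ≤ f(u) for all u with ∑ᵢ u i = 1, then w = w* := (1/c) • (G⁻¹.mulVec 1), where c = ∑ᵢ ∑ⱼ (G⁻¹) i j. -/
open Matrix BigOperators

/-- A pairwise reciprocal matrix (PRM): all entries positive and `A i j * A j i = 1`. -/
def IsPRM {n : ℕ} (A : Matrix (Fin n) (Fin n) ℝ) : Prop :=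
  ∀ i j, 0 < A i j ∧ A i j * A j i = 1

/-- The matrix `Ḡ` with diagonal `(n-1) + ∑_{k ≠ i} (A k i)^2` and
off-diagonal `-(A i j + A j i)`. -/
noncomputable def Gbar {n : ℕ} (A : Matrix (Fin n) (Fin n) ℝ) :
    Matrix (Fin n) (Fin n) ℝ :=
  Matrix.of fun i j =>
    if i = j then ((n : ℝ) - 1) + ∑ k ∈ Finset.univ.filter (fun k => k ≠ i), (A k i) ^ 2
    else -(A i j + A j i)

/-- The all-ones matrix `J`. -/
noncomputable def Jmat (n : ℕ) : Matrix (Fin n) (Fin n) ℝ :=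
  Matrix.of fun _ _ => 1

/-- `G = Ḡ + J`. -/
noncomputable def Gmat {n : ℕ} (A : Matrix (Fin n) (Fin n) ℝ) :
    Matrix (Fin n) (Fin n) ℝ :=
  Gbar A + Jmat n

/-- The weighted least squares objective `f(w) = ∑ i ∑ j (w i - A i j * w j)^2`. -/
noncomputable def wls {n : ℕ} (A : Matrix (Fin n) (Fin n) ℝ) (w : Fin n → ℝ) : ℝ :=
  ∑ i, ∑ j, (w i - A i j * w j) ^ 2

lemma aux_diag {n : ℕ} {A : Matrix (Fin n) (Fin n) ℝ} (hA : IsPRM A) (i : Fin n) :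
    A i i = 1 := by
  have h := hA i i
  nlinarith [h.1, h.2]

lemma aux_double_sum_symm {n : ℕ} (F G : Fin n → Fin n → ℝ)
    (h : ∀ i j, F i j + F j i = G i j + G j i) :
    ∑ i, ∑ j, F i j = ∑ i, ∑ j, G i j := by
  have key : ∀ H : Fin n → Fin n → ℝ,
      ∑ i, ∑ j, (H i j + H j i) = 2 * ∑ i, ∑ j, H i j := by
    intro H
    simp only [Finset.sum_add_distrib]
    rw [Finset.sum_comm (f := fun i j => H j i)]
    ring
  have h2 : (2 : ℝ) * ∑ i, ∑ j, F i j = 2 * ∑ i, ∑ j, G i j := by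
    rw [← key, ← key]
    exact Finset.sum_congr rfl fun i _ => Finset.sum_congr rfl fun j _ => h i j
  linarith

lemma aux_wls_eq_quad {n : ℕ} {A : Matrix (Fin n) (Fin n) ℝ} (hA : IsPRM A)
    (u : Fin n → ℝ) : wls A u = u ⬝ᵥ (Gbar A) *ᵥ u := by
  have step1 : wls A u
      = ∑ i, ∑ j, (u i ^ 2 + (A j i) ^ 2 * u i ^ 2 - (A i j + A j i) * (u i * u j)) := by
    apply aux_double_sum_symm
    intro i j
    ring
  rw [step1]
  unfold dotProduct mulVec dotProduct
  apply Finset.sum_congr rfl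
  intro i _
  have hmem : i ∈ (Finset.univ : Finset (Fin n)) := Finset.mem_univ i
  have hsplit : ∀ f : Fin n → ℝ, ∑ j, f j = f i + ∑ j ∈ Finset.univ.erase i, f j :=
    fun f => (Finset.add_sum_erase Finset.univ f hmem).symm
  rw [hsplit (fun j => u i ^ 2 + (A j i) ^ 2 * u i ^ 2 - (A i j + A j i) * (u i * u j)),
      hsplit (fun j => Gbar A i j * u j)]
  have hdiag : Gbar A i i
      = ((n : ℝ) - 1) + ∑ k ∈ Finset.univ.erase i, (A k i) ^ 2 := by
    simp [Gbar, Finset.filter_ne']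
  have hoff : ∀ j ∈ Finset.univ.erase i, Gbar A i j = -(A i j + A j i) := by
    intro j hj
    have hij : i ≠ j := (Finset.ne_of_mem_erase hj).symm
    simp [Gbar, hij]
  have hsum_erase1 : ∑ j ∈ Finset.univ.erase i,
      (u i ^ 2 + (A j i) ^ 2 * u i ^ 2 - (A i j + A j i) * (u i * u j))
      = ((Finset.univ.erase i).card : ℝ) * u i ^ 2
        + (∑ j ∈ Finset.univ.erase i, (A j i) ^ 2) * u i ^ 2
        - ∑ j ∈ Finset.univ.erase i, (A i j + A j i) * (u i * u j) := by
    rw [Finset.sum_sub_distrib, Finset.sum_add_distrib, Finset.sum_const, Finset.sum_mul,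
        nsmul_eq_mul]
  have h3 : u i * ∑ j ∈ Finset.univ.erase i, Gbar A i j * u j
      = -∑ j ∈ Finset.univ.erase i, (A i j + A j i) * (u i * u j) := by
    rw [Finset.mul_sum, ← Finset.sum_neg_distrib]
    apply Finset.sum_congr rfl
    intro j hj
    rw [hoff j hj]
    ring
  have hcard : ((Finset.univ.erase i).card : ℝ) = (n : ℝ) - 1 := by
    rw [Finset.card_erase_of_mem hmem, Finset.card_univ, Fintype.card_fin]
    have : 1 ≤ n := i.pos
    push_cast [Nat.cast_sub this]
    ring
  rw [hsum_erase1, mul_add, h3, hdiag, hcard, aux_diag hA i]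
  ring

lemma aux_J_quad {n : ℕ} (u : Fin n → ℝ) :
    u ⬝ᵥ (Jmat n) *ᵥ u = (∑ i, u i) ^ 2 := by
  simp only [dotProduct, mulVec, dotProduct, Jmat, Matrix.of_apply, one_mul]
  rw [← Finset.sum_mul, sq]

lemma aux_G_quad {n : ℕ} {A : Matrix (Fin n) (Fin n) ℝ} (hA : IsPRM A)
    (u : Fin n → ℝ) : u ⬝ᵥ (Gmat A) *ᵥ u = wls A u + (∑ i, u i) ^ 2 := by
  rw [Gmat, Matrix.add_mulVec, dotProduct_add, aux_wls_eq_quad hA, aux_J_quad]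

lemma aux_G_symm {n : ℕ} (A : Matrix (Fin n) (Fin n) ℝ) : (Gmat A)ᵀ = Gmat A := by
  ext i j
  by_cases h : i = j
  · subst h; rfl
  · simp [Gmat, Gbar, Jmat, Matrix.transpose_apply, h, Ne.symm h]
    ring

lemma aux_wls_nonneg {n : ℕ} (A : Matrix (Fin n) (Fin n) ℝ) (u : Fin n → ℝ) :
    0 ≤ wls A u :=
  Finset.sum_nonneg fun i _ => Finset.sum_nonneg fun j _ => sq_nonneg _

lemma aux_wls_zero {n : ℕ} {A : Matrix (Fin n) (Fin n) ℝ} (hA : IsPRM A)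
    {u : Fin n → ℝ} (h0 : wls A u = 0) (hs : ∑ i, u i = 0) : u = 0 := by
  have hz : ∀ i j, u i = A i j * u j := by
    intro i j
    have h1 : ∀ i ∈ (Finset.univ : Finset (Fin n)),
        ∑ j, (u i - A i j * u j) ^ 2 = 0 := by
      rw [← Finset.sum_eq_zero_iff_of_nonneg
        (fun i _ => Finset.sum_nonneg fun j _ => sq_nonneg _)]
      exact h0
    have h2 := (Finset.sum_eq_zero_iff_of_nonneg
      (fun j _ => sq_nonneg (u i - A i j * u j))).mp (h1 i (Finset.mem_univ i)) j
      (Finset.mem_univ j)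
    have := pow_eq_zero_iff (n := 2) (by norm_num) |>.mp h2
    linarith
  funext j
  have hsum : (0 : ℝ) = (∑ i, A i j) * u j := by
    rw [← hs, Finset.sum_mul]
    exact Finset.sum_congr rfl fun i _ => hz i j
  have hpos : 0 < ∑ i, A i j :=
    Finset.sum_pos (fun i _ => (hA i j).1) ⟨j, Finset.mem_univ j⟩
  have : u j = 0 := by
    rcases mul_eq_zero.mp hsum.symm with h | h
    · exact absurd h hpos.ne'
    · exact h
  simpa using this

lemma aux_G_posdef {n : ℕ} {A : Matrix (Fin n) (Fin n) ℝ} (hA : IsPRM A) :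
    (Gmat A).PosDef := by
  rw [posDef_iff_dotProduct_mulVec]
  constructor
  · show (Gmat A)ᴴ = Gmat A
    rw [conjTranspose_eq_transpose_of_trivial, aux_G_symm]
  · intro x hx
    rw [star_trivial, aux_G_quad hA]
    rcases eq_or_ne (∑ i, x i) 0 with hs | hs
    · rw [hs]
      have : wls A x ≠ 0 := fun h => hx (aux_wls_zero hA h hs)
      have := lt_of_le_of_ne (aux_wls_nonneg A x) (Ne.symm this)
      nlinarith
    · have := aux_wls_nonneg A x
      nlinarith [sq_pos_of_ne_zero hs]

/-- the constrained WLS minimizer is unique: any `w` with `∑ i, w i = 1`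
minimizing `f` over the constraint set equals `w* = (1/c) • (G⁻¹.mulVec 1)`. -/
theorem pigm_unique_minimizer {n : ℕ} (hn : 1 ≤ n)
    (A : Matrix (Fin n) (Fin n) ℝ) (hA : IsPRM A) (w : Fin n → ℝ)
    (hsum : ∑ i, w i = 1)
    (hmin : ∀ u : Fin n → ℝ, (∑ i, u i = 1) → wls A w ≤ wls A u) :
    w = (1 / ∑ i, ∑ j, (Gmat A)⁻¹ i j) • ((Gmat A)⁻¹.mulVec 1) := by
  set G := Gmat A with hG
  have hpd : G.PosDef := aux_G_posdef hA
  have hdet : IsUnit G.det := hpd.det_pos.ne'.isUnit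
  set x : Fin n → ℝ := G⁻¹ *ᵥ 1 with hx
  have hGx : G *ᵥ x = 1 := by
    rw [hx, Matrix.mulVec_mulVec, Matrix.mul_nonsing_inv _ hdet, Matrix.one_mulVec]
  have hc : ∑ i, ∑ j, G⁻¹ i j = ∑ i, x i := by
    simp [hx, Matrix.mulVec, dotProduct]
  set c : ℝ := ∑ i, x i with hcdef
  have hx0 : x ≠ 0 := by
    intro h
    have h1 : (1 : Fin n → ℝ) = 0 := by rw [← hGx, h, Matrix.mulVec_zero]
    have := congrFun h1 ⟨0, hn⟩
    simp at this
  have hq : x ⬝ᵥ G *ᵥ x = c := by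
    rw [hGx]
    simp [hcdef, dotProduct]
  have hcpos : 0 < c := by
    have := hpd.dotProduct_mulVec_pos hx0
    rw [star_trivial, hq] at this
    exact this
  set ws : Fin n → ℝ := (1 / c) • x with hws
  have hws_sum : ∑ i, ws i = 1 := by
    simp only [hws, Pi.smul_apply, smul_eq_mul, ← Finset.mul_sum, ← hcdef]
    field_simp
  set d : Fin n → ℝ := w - ws with hd
  have hd_sum : ∑ i, d i = 0 := by
    simp only [hd, Pi.sub_apply, Finset.sum_sub_distrib, hsum, hws_sum, sub_self]
  have hGws : G *ᵥ ws = (1 / c) • (1 : Fin n → ℝ) := by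
    rw [hws, Matrix.mulVec_smul, hGx]
  have cross : d ⬝ᵥ G *ᵥ ws = 0 := by
    rw [hGws, dotProduct_smul]
    simp [dotProduct, hd_sum]
  have cross' : ws ⬝ᵥ G *ᵥ d = 0 := by
    rw [Matrix.dotProduct_mulVec, ← Matrix.mulVec_transpose, aux_G_symm, ← hG,
        dotProduct_comm]
    exact cross
  have hwdecomp : w = ws + d := by
    funext i
    simp [hd]
  have hexp : w ⬝ᵥ G *ᵥ w = ws ⬝ᵥ G *ᵥ ws + d ⬝ᵥ G *ᵥ d := by
    rw [hwdecomp]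
    rw [Matrix.mulVec_add, dotProduct_add, add_dotProduct, add_dotProduct,
        cross, cross']
    ring
  have hle : wls A w ≤ wls A ws := hmin ws hws_sum
  have hqw : w ⬝ᵥ G *ᵥ w = wls A w + 1 := by rw [aux_G_quad hA, hsum]; norm_num
  have hqws : ws ⬝ᵥ G *ᵥ ws = wls A ws + 1 := by rw [aux_G_quad hA, hws_sum]; norm_num
  have hdq : d ⬝ᵥ G *ᵥ d ≤ 0 := by
    rw [hqw, hqws] at hexp
    linarith
  have hd0 : d = 0 := by
    by_contra h
    have := hpd.dotProduct_mulVec_pos h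
    rw [star_trivial] at this
    linarith
  have hwws : w = ws := by
    rw [hwdecomp, hd0, add_zero]
  rw [hwws, hws, hc]
end

section
/- (Lagrangian-IGM) For every pairwise reciprocal matrix A of size n ≥ 1, there exist a unique vector w : Fin n → ℝ and a unique λ ∈ ℝ satisfying the Lagrange system Ḡ.mulVec w + λ • 1 = 0 and ∑ᵢ w i = 1; moreover this w equals w* = (1/c) • (G⁻¹.mulVec 1) and λ = 1 − 1/c, where c = ∑ᵢ ∑ⱼ (G⁻¹) i j; in particular λ equals the negative of the minimal WLS objective value. -/
open Matrix BigOperators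

section Helpers
variable {n : ℕ} {A : Matrix (Fin n) (Fin n) ℝ}

lemma prm_diag (hA : IsPRM A) (i : Fin n) : A i i = 1 := by
  have h := (hA i i).2
  have h2 := (hA i i).1
  nlinarith

lemma Gbar_eq (hA : IsPRM A) (i j : Fin n) :
    Gbar A i j = (if i = j then ((n : ℝ) + ∑ k, (A k i) ^ 2) else 0) - (A i j + A j i) := by
  simp only [Gbar, Matrix.of_apply]
  split_ifs with h
  · subst h
    rw [Finset.filter_ne', ← Finset.add_sum_erase _ _ (Finset.mem_univ i), prm_diag hA]
    ring
  · ring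

lemma Gbar_mulVec (hA : IsPRM A) (w : Fin n → ℝ) (i : Fin n) :
    (Gbar A *ᵥ w) i = ((n : ℝ) + ∑ k, (A k i) ^ 2) * w i - ∑ j, (A i j + A j i) * w j := by
  simp only [mulVec, dotProduct]
  rw [show ∑ j, Gbar A i j * w j
      = ∑ j, ((if i = j then ((n : ℝ) + ∑ k, (A k i) ^ 2) else 0) * w j - (A i j + A j i) * w j)
      from Finset.sum_congr rfl fun j _ => by rw [Gbar_eq hA]; ring]
  rw [Finset.sum_sub_distrib]
  simp only [ite_mul, zero_mul, Finset.sum_ite_eq, Finset.mem_univ, if_pos]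

lemma sum_sym {f g : Fin n → Fin n → ℝ} (h : ∀ i j, f i j + f j i = g i j + g j i) :
    ∑ i, ∑ j, f i j = ∑ i, ∑ j, g i j := by
  have h2 : ∑ i, ∑ j, (f i j + f j i) = ∑ i, ∑ j, (g i j + g j i) := by
    exact Finset.sum_congr rfl fun i _ => Finset.sum_congr rfl fun j _ => h i j
  simp_rw [Finset.sum_add_distrib] at h2
  have hf : ∑ i, ∑ j, f j i = ∑ i, ∑ j, f i j := Finset.sum_comm
  have hg : ∑ i, ∑ j, g j i = ∑ i, ∑ j, g i j := Finset.sum_comm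
  linarith

lemma qf_eq (hA : IsPRM A) (w : Fin n → ℝ) :
    w ⬝ᵥ (Gbar A *ᵥ w) = wls A w := by
  have step : ∀ i, w i * ((Gbar A *ᵥ w) i)
      = ∑ j, (w i ^ 2 + (A j i) ^ 2 * w i ^ 2 - (A i j + A j i) * (w i * w j)) := by
    intro i
    rw [Gbar_mulVec hA, mul_sub, Finset.mul_sum, Finset.sum_sub_distrib,
      Finset.sum_add_distrib, ← Finset.sum_mul, Finset.sum_const]
    simp only [Finset.card_univ, Fintype.card_fin, nsmul_eq_mul]
    congr 1
    · ring
    · exact Finset.sum_congr rfl fun j _ => by ring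
  unfold dotProduct wls
  rw [Finset.sum_congr rfl fun i _ => step i]
  exact sum_sym (fun i j => by ring)

end Helpers

section Main
variable {n : ℕ} {A : Matrix (Fin n) (Fin n) ℝ}

lemma Gmat_mulVec (w : Fin n → ℝ) :
    Gmat A *ᵥ w = Gbar A *ᵥ w + (∑ i, w i) • (1 : Fin n → ℝ) := by
  funext i
  simp only [Gmat, Jmat, mulVec, dotProduct, Matrix.add_apply, Matrix.of_apply,
    Pi.add_apply, Pi.smul_apply, Pi.one_apply, smul_eq_mul, mul_one]
  rw [← Finset.sum_add_distrib]
  exact Finset.sum_congr rfl fun j _ => by ring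

lemma wls_nonneg (w : Fin n → ℝ) : 0 ≤ wls A w :=
  Finset.sum_nonneg fun i _ => Finset.sum_nonneg fun j _ => sq_nonneg _

lemma wls_eq_zero (hn : 1 ≤ n) (hA : IsPRM A) {w : Fin n → ℝ}
    (h0 : wls A w = 0) (hs : ∑ i, w i = 0) : w = 0 := by
  have key : ∀ i j, w i = A i j * w j := by
    intro i j
    have h1 : ∀ i ∈ (Finset.univ : Finset (Fin n)), (0:ℝ) ≤ ∑ j, (w i - A i j * w j)^2 :=
      fun i _ => Finset.sum_nonneg fun j _ => sq_nonneg _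
    have h2 := (Finset.sum_eq_zero_iff_of_nonneg h1).mp h0 i (Finset.mem_univ i)
    have h3 := (Finset.sum_eq_zero_iff_of_nonneg
      (fun j _ => sq_nonneg (w i - A i j * w j))).mp h2 j (Finset.mem_univ j)
    have := pow_eq_zero_iff (n := 2) (by norm_num) |>.mp h3
    linarith
  funext j
  have hsum : ∑ i, w i = (∑ i, A i j) * w j := by
    rw [Finset.sum_mul]; exact Finset.sum_congr rfl fun i _ => key i j
  have hpos : 0 < ∑ i, A i j :=
    Finset.sum_pos (fun i _ => (hA i j).1) ⟨⟨0, hn⟩, Finset.mem_univ _⟩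
  have : (∑ i, A i j) * w j = 0 := by rw [← hsum, hs]
  have := mul_eq_zero.mp this
  simp only [Pi.zero_apply]
  rcases this with h | h
  · exact absurd h hpos.ne'
  · exact h

lemma Gmat_posDef (hn : 1 ≤ n) (hA : IsPRM A) : (Gmat A).PosDef := by
  refine Matrix.posDef_iff_dotProduct_mulVec.mpr ⟨?_, ?_⟩
  · ext i j
    simp only [Gmat, Gbar, Jmat, conjTranspose_apply, Matrix.add_apply, Matrix.of_apply,
      star_trivial]
    split_ifs with h1 h2 h2
    · subst h1; rfl
    · exact absurd h1.symm h2
    · exact absurd h2.symm h1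
    · ring
  · intro x hx
    rw [star_trivial, Gmat_mulVec, dotProduct_add]
    have h1 : x ⬝ᵥ (∑ i, x i) • (1 : Fin n → ℝ) = (∑ i, x i)^2 := by
      simp [dotProduct, Finset.mul_sum, mul_comm, sq, Finset.sum_mul]
    rw [h1, qf_eq hA]
    rcases lt_or_eq_of_le (wls_nonneg x (A := A)) with h | h
    · positivity
    · have h2 : (∑ i, x i) ≠ 0 := fun hs => hx (wls_eq_zero hn hA h.symm hs)
      have : 0 < (∑ i, x i)^2 := by positivity
      linarith

end Main


/-- Lagrangian-IGM: there exist a unique `w` and a unique `λ` with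
`Ḡ.mulVec w + λ • 1 = 0` and `∑ i, w i = 1`; moreover `w = w*` and `λ = 1 − 1/c`,
which is the negative of the minimal WLS objective value. -/
theorem lagrangian_igm {n : ℕ} (hn : 1 ≤ n)
    (A : Matrix (Fin n) (Fin n) ℝ) (hA : IsPRM A) :
    let c : ℝ := ∑ i, ∑ j, (Gmat A)⁻¹ i j
    let wstar : Fin n → ℝ := (1 / c) • ((Gmat A)⁻¹.mulVec 1)
    (∃! p : (Fin n → ℝ) × ℝ,
      (Gbar A).mulVec p.1 + p.2 • (1 : Fin n → ℝ) = 0 ∧ ∑ i, p.1 i = 1) ∧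
    (∀ p : (Fin n → ℝ) × ℝ,
      ((Gbar A).mulVec p.1 + p.2 • (1 : Fin n → ℝ) = 0 ∧ ∑ i, p.1 i = 1) →
        p.1 = wstar ∧ p.2 = 1 - 1 / c) ∧
    1 - 1 / c = -(wls A wstar) := by
  intro c wstar
  have hpd := Gmat_posDef hn hA
  have hdet : IsUnit (Gmat A).det := hpd.det_pos.ne'.isUnit
  have hGinv : (Gmat A)⁻¹ * Gmat A = 1 := Matrix.nonsing_inv_mul _ hdet
  have hGinv' : Gmat A * (Gmat A)⁻¹ = 1 := Matrix.mul_nonsing_inv _ hdet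
  have hc_eq : c = ∑ i, ((Gmat A)⁻¹ *ᵥ (1 : Fin n → ℝ)) i := by
    simp [c, mulVec, dotProduct]
  have hc_pos : 0 < c := by
    have hinv : ((Gmat A)⁻¹).PosDef := hpd.inv
    have h1 : (1 : Fin n → ℝ) ≠ 0 := by
      intro h
      have := congrFun h ⟨0, hn⟩
      simpa using this
    have h2 := hinv.dotProduct_mulVec_pos h1
    rw [star_trivial] at h2
    have h3 : (1 : Fin n → ℝ) ⬝ᵥ ((Gmat A)⁻¹ *ᵥ 1) = c := by
      rw [hc_eq]; simp [dotProduct]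
    linarith [h3 ▸ h2]
  have hc_ne : c ≠ 0 := hc_pos.ne'
  have hsum_wstar : ∑ i, wstar i = 1 := by
    show ∑ i, ((1/c) • ((Gmat A)⁻¹ *ᵥ (1:Fin n → ℝ))) i = 1
    simp only [Pi.smul_apply, smul_eq_mul, ← Finset.mul_sum, ← hc_eq]
    field_simp
  have hGwstar : Gmat A *ᵥ wstar = (1/c) • (1 : Fin n → ℝ) := by
    show Gmat A *ᵥ ((1/c) • ((Gmat A)⁻¹ *ᵥ 1)) = _
    rw [Matrix.mulVec_smul, Matrix.mulVec_mulVec, hGinv', Matrix.one_mulVec]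
  have hGbar_wstar : Gbar A *ᵥ wstar = (1/c) • (1 : Fin n → ℝ) - (1 : Fin n → ℝ) := by
    have := Gmat_mulVec (A := A) wstar
    rw [hGwstar, hsum_wstar, one_smul] at this
    funext i
    have := congrFun this i
    simp at this ⊢
    linarith
  have huniq : ∀ p : (Fin n → ℝ) × ℝ,
      ((Gbar A).mulVec p.1 + p.2 • (1 : Fin n → ℝ) = 0 ∧ ∑ i, p.1 i = 1) →
        p.1 = wstar ∧ p.2 = 1 - 1 / c := by
    rintro ⟨w, lam⟩ ⟨h1, h2⟩
    have hG : Gmat A *ᵥ w = (1 - lam) • (1 : Fin n → ℝ) := by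
      rw [Gmat_mulVec, h2, one_smul]
      funext i
      have := congrFun h1 i
      simp at this ⊢
      linarith
    have hw : w = (1 - lam) • ((Gmat A)⁻¹ *ᵥ (1 : Fin n → ℝ)) := by
      have hww : (Gmat A)⁻¹ *ᵥ (Gmat A *ᵥ w) = w := by
        rw [Matrix.mulVec_mulVec, hGinv, Matrix.one_mulVec]
      rw [← hww, hG, Matrix.mulVec_smul]
    have hsum : (1 - lam) * c = 1 := by
      have h3 := congrArg (fun v => ∑ i, v i) hw
      simp only [Pi.smul_apply, smul_eq_mul, ← Finset.mul_sum, ← hc_eq, h2] at h3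
      linarith
    have hlam : lam = 1 - 1/c := by
      field_simp
      nlinarith [hsum]
    refine ⟨?_, hlam⟩
    rw [hw]
    show _ = (1/c) • ((Gmat A)⁻¹ *ᵥ (1 : Fin n → ℝ))
    congr 1
    rw [hlam]
    field_simp
    rw [show c - (c - 1) = 1 by ring]
  have hP : (Gbar A).mulVec wstar + (1 - 1/c) • (1 : Fin n → ℝ) = 0 ∧ ∑ i, wstar i = 1 := by
    refine ⟨?_, hsum_wstar⟩
    rw [hGbar_wstar]
    funext i
    simp
  have hwlsval : wls A wstar = 1/c - 1 := by
    rw [← qf_eq hA, hGbar_wstar]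
    have : wstar ⬝ᵥ ((1/c) • (1 : Fin n → ℝ) - 1) = (∑ i, wstar i) * (1/c - 1) := by
      simp only [dotProduct, Pi.sub_apply, Pi.smul_apply, Pi.one_apply, smul_eq_mul,
        mul_one, Finset.sum_mul]
    rw [this, hsum_wstar, one_mul]
  refine ⟨⟨(wstar, 1 - 1/c), hP, fun q hq => ?_⟩, huniq, by linarith⟩
  obtain ⟨e1, e2⟩ := huniq q hq
  exact Prod.ext e1 e2
end
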